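/- Let b ∈ C¹(ℝ²;ℝ²) be bounded with first component satisfying 1 ≤ b₁(x) ≤ 2 for all x ∈ ℝ², and let X : ℝ × ℝ² → ℝ² be the (globally defined) flow of b, i.e. ∂_t X(t,x) = b(X(t,x)), X(0,x) = x. Fix δ ∈ ℝ² and x ∈ ℝ². Then for every t ∈ ℝ there exists a unique real number t_δ(t,x) such that X₁(t_δ(t,x), x) = X₁(t, x+δ), where X₁ denotes the first component of X; moreover the map t ↦ t_δ(t,x) is continuously differentiable and 1/2 ≤ ∂_t t_δ(t,x) ≤ 2 for all t. -/

import Mathlib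

open MeasureTheory Set

/-- Let `b ∈ C¹(ℝ²;ℝ²)` be bounded with `1 ≤ b₁ ≤ 2` and let `X` be
its global flow. Then for every `δ` and `x` there is a map `t ↦ t_δ(t,x)`, uniquely
characterized by `X₁(t_δ(t,x),x) = X₁(t,x+δ)`, which is `C¹` with derivative in
`[1/2,2]`. -/
theorem stmt14 (b : EuclideanSpace ℝ (Fin 2) → EuclideanSpace ℝ (Fin 2))
    (hb : ContDiff ℝ 1 b) (hbbd : ∃ M : ℝ, ∀ x, ‖b x‖ ≤ M)
    (hb1 : ∀ x, 1 ≤ b x 0 ∧ b x 0 ≤ 2)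
    (X : ℝ → EuclideanSpace ℝ (Fin 2) → EuclideanSpace ℝ (Fin 2))
    (hX0 : ∀ x, X 0 x = x)
    (hXode : ∀ x t, HasDerivAt (fun s => X s x) (b (X t x)) t)
    (δ x : EuclideanSpace ℝ (Fin 2)) :
    ∃ τ : ℝ → ℝ,
      (∀ t, X (τ t) x 0 = X t (x + δ) 0) ∧
      (∀ t s, X s x 0 = X t (x + δ) 0 → s = τ t) ∧
      ContDiff ℝ 1 τ ∧
      ∀ t, deriv τ t ∈ Set.Icc (1 / 2 : ℝ) 2 := by
  have key : ∀ y : EuclideanSpace ℝ (Fin 2), ∀ t,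
      HasDerivAt (fun s => X s y 0) (b (X t y) 0) t := by
    intro y t
    have h := (EuclideanSpace.proj (0 : Fin 2)).hasFDerivAt.comp_hasDerivAt t (hXode y t)
    exact h
  set f : ℝ → ℝ := fun s => X s x 0 with hf_def
  set g : ℝ → ℝ := fun t => X t (x + δ) 0 with hg_def
  have hfd : ∀ s, HasDerivAt f (b (X s x) 0) s := key x
  have hgd : ∀ t, HasDerivAt g (b (X t (x + δ)) 0) t := key (x + δ)
  have hpos : ∀ y, (0 : ℝ) < b y 0 := fun y => lt_of_lt_of_le zero_lt_one (hb1 y).1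
  have hmono : StrictMono f := by
    apply strictMono_of_deriv_pos
    intro s
    rw [(hfd s).deriv]
    exact hpos _
  have hsurj : Function.Surjective f := by
    intro y
    have hsub : Monotone (fun s => f s - s) := by
      apply monotone_of_deriv_nonneg
      · exact fun s => ((hfd s).sub (hasDerivAt_id' (x := s))).differentiableAt
      · intro s
        rw [HasDerivAt.deriv (f := fun s => f s - s) ((hfd s).sub (hasDerivAt_id' (x := s)))]
        linarith [(hb1 (X s x)).1]
    set a := min (y - f 0) 0 with ha
    set c := max (y - f 0) 0 with hc
    have hac : a ≤ c := le_trans (min_le_right _ _) (le_max_right _ _)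
    have h1 : f a - a ≤ f 0 - 0 := hsub (min_le_right _ _)
    have h2 : f 0 - 0 ≤ f c - c := hsub (le_max_right _ _)
    have hfa : f a ≤ y := by
      have := min_le_left (y - f 0) 0
      linarith
    have hfc : y ≤ f c := by
      have := le_max_left (y - f 0) 0
      linarith
    have hcont : ContinuousOn f (Icc a c) :=
      (Differentiable.continuous fun s => (hfd s).differentiableAt).continuousOn
    obtain ⟨s, _, hs⟩ := intermediate_value_Icc hac hcont ⟨hfa, hfc⟩
    exact ⟨s, hs⟩
  set e : ℝ ≃o ℝ := StrictMono.orderIsoOfSurjective f hmono hsurj with he_def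
  have he : ∀ s, e s = f s := fun s => rfl
  set τ : ℝ → ℝ := fun t => e.symm (g t) with hτ_def
  have hτeq : ∀ t, f (τ t) = g t := by
    intro t
    have := e.apply_symm_apply (g t)
    rw [he] at this
    exact this
  have hsymm_cont : Continuous (fun y : ℝ => e.symm y) := e.symm.continuous
  have hinv : ∀ a : ℝ, HasDerivAt (fun y => e.symm y) (b (X (e.symm a) x) 0)⁻¹ a := by
    intro a
    refine HasDerivAt.of_local_left_inverse hsymm_cont.continuousAt (hfd (e.symm a))
      (ne_of_gt (hpos _)) ?_
    filter_upwards with y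
    have := e.apply_symm_apply y
    rw [he] at this
    exact this
  have hτd : ∀ t, HasDerivAt τ ((b (X (τ t) x) 0)⁻¹ * b (X t (x + δ)) 0) t :=
    fun t => (hinv (g t)).comp t (hgd t)
  have hτcont : Continuous τ :=
    hsymm_cont.comp (Differentiable.continuous fun t => (hgd t).differentiableAt)
  have hXcont : ∀ y, Continuous (fun s => X s y) :=
    fun y => Differentiable.continuous fun s => (hXode y s).differentiableAt
  have hderiv : ∀ t, deriv τ t = (b (X (τ t) x) 0)⁻¹ * b (X t (x + δ)) 0 :=
    fun t => (hτd t).deriv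
  refine ⟨τ, hτeq, ?_, ?_, ?_⟩
  · intro t s hs
    exact hmono.injective (hs.trans (hτeq t).symm)
  · rw [contDiff_one_iff_deriv]
    constructor
    · exact fun t => (hτd t).differentiableAt
    · have : (deriv τ) = fun t => (b (X (τ t) x) 0)⁻¹ * b (X t (x + δ)) 0 :=
        funext hderiv
      rw [this]
      have hc1 : Continuous (fun t => b (X (τ t) x) 0) :=
        (PiLp.continuous_apply 2 _ (0 : Fin 2)).comp
          (hb.continuous.comp ((hXcont x).comp hτcont))
      have hc2 : Continuous (fun t => b (X t (x + δ)) 0) :=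
        (PiLp.continuous_apply 2 _ (0 : Fin 2)).comp (hb.continuous.comp (hXcont (x + δ)))
      exact (hc1.inv₀ fun t => ne_of_gt (hpos _)).mul hc2
  · intro t
    rw [hderiv t]
    obtain ⟨ha1, ha2⟩ := hb1 (X (τ t) x)
    obtain ⟨hc1, hc2⟩ := hb1 (X t (x + δ))
    have hapos : (0 : ℝ) < b (X (τ t) x) 0 := hpos _
    constructor
    · rw [inv_mul_eq_div, le_div_iff₀ hapos]
      nlinarith
    · rw [inv_mul_eq_div, div_le_iff₀ hapos]
      nlinarith
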